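/- Let X and Z be Banach spaces, 1 < p ≤ ∞ with conjugate exponent q, and Y = X ⊕_p Z with dual norm ‖(x*,z*)‖ = (‖x*‖^q + ‖z*‖^q)^{1/q}. Suppose (xₙ*) is a sequence in B_{X*} weak* converging to x₀* such that the sequence of norms ‖xₙ*‖ does NOT converge to ‖x₀*‖. Then there exists a point (x₀*, z₀*) in the fiber over x₀* in B_{Y*} such that no sequence (xₙ*, zₙ*) ∈ B_{Y*} converges weak* to (x₀*, z₀*). -/

import Mathlib

open Filter Topology NormedSpace

lemma lsc_norm {X : Type*} [NormedAddCommGroup X] [NormedSpace ℝ X]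
    {l : Filter ℕ} [l.NeBot] {f : ℕ → StrongDual ℝ X} {f₀ : StrongDual ℝ X}
    (h : Tendsto (fun n => StrongDual.toWeakDual (f n)) l (𝓝 (StrongDual.toWeakDual f₀)))
    {c : ℝ} (hc : 0 ≤ c) (hb : ∀ᶠ n in l, ‖f n‖ ≤ c) : ‖f₀‖ ≤ c := by
  apply ContinuousLinearMap.opNorm_le_bound _ hc
  intro y
  have hev : Tendsto (fun n => f n y) l (𝓝 (f₀ y)) :=
    ((WeakDual.eval_continuous y).continuousAt).tendsto.comp h
  refine le_of_tendsto hev.norm ?_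
  filter_upwards [hb] with n hn
  calc ‖f n y‖ ≤ ‖f n‖ * ‖y‖ := (f n).le_opNorm y
    _ ≤ c * ‖y‖ := by gcongr

lemma rpow_oneDiv_rpow {s q : ℝ} (hs : 0 ≤ s) (hq : q ≠ 0) : (s ^ (1 / q)) ^ q = s := by
  rw [← Real.rpow_mul hs, one_div, inv_mul_cancel₀ hq, Real.rpow_one]

set_option synthInstance.maxHeartbeats 1000000 in
/-- For Banach spaces `X`, `Z` (with `Z` nontrivial, so that `Z*` contains
vectors of any norm) and the ℓᵖ-sum `Y = X ⊕_p Z`, `1 < p ≤ ∞`, with dual norm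
`(‖x*‖^q + ‖z*‖^q)^(1/q)` for the conjugate exponent `q` (so `1 ≤ q < ∞`): if `(xₙ*)` in
`B_{X*}` weak* converges to `x₀*` but `‖xₙ*‖` does NOT converge to `‖x₀*‖`, then there
is a point `(x₀*, z₀*)` of the fiber over `x₀*` in `B_{Y*}` to which no sequence
`(xₙ*, zₙ*) ∈ B_{Y*}` lying over the `xₙ*` can weak* converge. -/
theorem ellp_sum_not_fiber_convergent_of_norms_not_convergent
    (X Z : Type*) [NormedAddCommGroup X] [NormedSpace ℝ X] [CompleteSpace X]
    [NormedAddCommGroup Z] [NormedSpace ℝ Z] [CompleteSpace Z] [Nontrivial Z]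
    (q : ℝ) (hq : 1 ≤ q)
    (x : ℕ → StrongDual ℝ X) (x₀ : StrongDual ℝ X)
    (hball : ∀ n, ‖x n‖ ≤ 1)
    (hw : Tendsto (fun n => StrongDual.toWeakDual (x n)) atTop (𝓝 (StrongDual.toWeakDual x₀)))
    (hnot : ¬ Tendsto (fun n => ‖x n‖) atTop (𝓝 ‖x₀‖)) :
    ∃ z₀ : StrongDual ℝ Z, (‖x₀‖ ^ q + ‖z₀‖ ^ q) ^ (1 / q) ≤ 1 ∧
      ¬ ∃ z : ℕ → StrongDual ℝ Z,
          (∀ n, (‖x n‖ ^ q + ‖z n‖ ^ q) ^ (1 / q) ≤ 1) ∧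
          Tendsto (fun n => (StrongDual.toWeakDual (x n), StrongDual.toWeakDual (z n))) atTop
            (𝓝 (StrongDual.toWeakDual x₀, StrongDual.toWeakDual z₀)) := by
  have hq0 : 0 < q := lt_of_lt_of_le one_pos hq
  have hq0' : q ≠ 0 := ne_of_gt hq0
  have h1q : 0 < 1 / q := by positivity
  set a := ‖x₀‖ with ha
  have ha0 : 0 ≤ a := norm_nonneg _
  have hx0le1 : a ≤ 1 := lsc_norm hw zero_le_one (Eventually.of_forall hball)
  -- extract ε and a subsequence with ‖x (φ k)‖ ≥ a + ε
  rw [Metric.tendsto_atTop] at hnot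
  push_neg at hnot
  obtain ⟨ε, hε, hfr⟩ := hnot
  have hfreq : ∃ᶠ n in atTop, ε ≤ dist ‖x n‖ a := by
    rw [frequently_atTop]
    intro N; obtain ⟨n, hn, hd⟩ := hfr N; exact ⟨n, hn, hd⟩
  have hfreq2 : ∃ᶠ n in atTop, a + ε ≤ ‖x n‖ := by
    by_cases hlow : ∃ᶠ n in atTop, ‖x n‖ ≤ a - ε
    · exfalso
      obtain ⟨φ, hφ, hφle⟩ := extraction_of_frequently_atTop hlow
      have hwφ : Tendsto (fun k => StrongDual.toWeakDual (x (φ k))) atTop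
          (𝓝 (StrongDual.toWeakDual x₀)) := hw.comp hφ.tendsto_atTop
      have hc : 0 ≤ a - ε := le_trans (norm_nonneg (x (φ 0))) (hφle 0)
      have := lsc_norm hwφ hc (Eventually.of_forall hφle)
      linarith
    · rw [not_frequently] at hlow
      refine (hfreq.and_eventually hlow).mono ?_
      rintro n ⟨hd, hnl⟩
      rw [Real.dist_eq] at hd
      rw [not_le] at hnl
      rcases le_abs.mp hd with h | h
      · linarith
      · linarith
  obtain ⟨φ, hφ, hφge⟩ := extraction_of_frequently_atTop hfreq2
  have haε1 : a + ε ≤ 1 := le_trans (hφge 0) (hball (φ 0))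
  have haq1 : a ^ q ≤ 1 := Real.rpow_le_one ha0 hx0le1 hq0.le
  -- choose z₀ of norm r
  set r : ℝ := (1 - a ^ q) ^ (1 / q) with hr
  have hr0 : 0 ≤ r := Real.rpow_nonneg (by linarith) _
  obtain ⟨g, hg1, -⟩ := exists_dual_vector' ℝ (0 : Z)
  refine ⟨r • g, ?_, ?_⟩
  · have hnz : ‖r • g‖ = r := by
      rw [norm_smul r g, hg1, mul_one, Real.norm_of_nonneg hr0]
    rw [hnz, hr, rpow_oneDiv_rpow (by linarith) hq0']
    simp
  · rintro ⟨z, hzball, hconv⟩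
    have hnz : ‖r • g‖ = r := by
      rw [norm_smul r g, hg1, mul_one, Real.norm_of_nonneg hr0]
    have hzw : Tendsto (fun n => StrongDual.toWeakDual (z n)) atTop
        (𝓝 (StrongDual.toWeakDual (r • g))) :=
      (continuous_snd.continuousAt).tendsto.comp hconv
    have hzwφ : Tendsto (fun k => StrongDual.toWeakDual (z (φ k))) atTop
        (𝓝 (StrongDual.toWeakDual (r • g))) := hzw.comp hφ.tendsto_atTop
    set c' : ℝ := 1 - (a + ε) ^ q with hc'
    have hkey : ∀ k, ‖z (φ k)‖ ^ q ≤ c' := by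
      intro k
      have hs0 : (0:ℝ) ≤ ‖x (φ k)‖ ^ q + ‖z (φ k)‖ ^ q := by
        have := Real.rpow_nonneg (norm_nonneg (x (φ k))) q
        have := Real.rpow_nonneg (norm_nonneg (z (φ k))) q
        linarith
      have hsum1 : ‖x (φ k)‖ ^ q + ‖z (φ k)‖ ^ q ≤ 1 := by
        have := Real.rpow_le_rpow (Real.rpow_nonneg hs0 _) (hzball (φ k)) hq0.le
        rwa [rpow_oneDiv_rpow hs0 hq0', Real.one_rpow] at this
      have hxk : (a + ε) ^ q ≤ ‖x (φ k)‖ ^ q :=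
        Real.rpow_le_rpow (by linarith) (hφge k) hq0.le
      linarith
    have hc'0 : 0 ≤ c' := le_trans (Real.rpow_nonneg (norm_nonneg _) q) (hkey 0)
    have hzk : ∀ k, ‖z (φ k)‖ ≤ c' ^ (1 / q) := by
      intro k
      have := Real.rpow_le_rpow (Real.rpow_nonneg (norm_nonneg _) q) (hkey k) h1q.le
      rwa [← Real.rpow_mul (norm_nonneg _), mul_one_div, div_self hq0', Real.rpow_one] at this
    have hlsc := lsc_norm hzwφ (Real.rpow_nonneg hc'0 _) (Eventually.of_forall hzk)
    rw [hnz] at hlsc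
    have hlt : c' < 1 - a ^ q := by
      have : a ^ q < (a + ε) ^ q := Real.rpow_lt_rpow ha0 (by linarith) hq0
      rw [hc']; linarith
    have : c' ^ (1 / q) < r := Real.rpow_lt_rpow hc'0 hlt h1q
    linarith
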